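/- Lemma 1 of the paper: for every integer n ≥ 1 and all r, s > 0, the mean coverage function α ↦ C(α, n, r, s) of the level-(1-α) Clopper–Pearson interval with respect to the Beta(r,s) density is continuous and strictly decreasing on (0,1). -/

import Mathlib

open MeasureTheory

/-- The Beta function `β(r,s) = ∫₀¹ t^(r-1) (1-t)^(s-1) dt`. -/
noncomputable def betaFun (r s : ℝ) : ℝ :=
  ∫ t in (0:ℝ)..1, t ^ (r - 1) * (1 - t) ^ (s - 1)

/-- The Beta(r,s) density `f(t;r,s) = t^(r-1)(1-t)^(s-1)/β(r,s)`. -/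
noncomputable def betaPDF (r s t : ℝ) : ℝ :=
  t ^ (r - 1) * (1 - t) ^ (s - 1) / betaFun r s

/-- The Beta(r,s) cumulative distribution function `∫₀ᵖ f(t;r,s) dt`. -/
noncomputable def betaCDF (r s p : ℝ) : ℝ :=
  ∫ t in (0:ℝ)..p, betaPDF r s t

/- The Beta quantile `B(q;r,s)`: the (unique, for `r,s>0`, `q∈(0,1)`) `t ∈ (0,1)`
with `∫₀ᵗ f(u;r,s) du = q`. -/
open Classical in
noncomputable def betaQuantile (r s q : ℝ) : ℝ :=
  if h : ∃ t, t ∈ Set.Ioo (0:ℝ) 1 ∧ betaCDF r s t = q then h.choose else 0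

/-- Lower Clopper–Pearson endpoint: `p_L(X,α) = B(α/2; X, n-X+1)` for `X ≥ 1`,
and `p_L(0,α) = 0`. -/
noncomputable def cpLower (n X : ℕ) (α : ℝ) : ℝ :=
  if X = 0 then 0 else betaQuantile (X : ℝ) ((n : ℝ) - X + 1) (α / 2)

/-- Upper Clopper–Pearson endpoint: `p_U(X,α) = B(1-α/2; X+1, n-X)` for `X ≤ n-1`,
and `p_U(n,α) = 1`. -/
noncomputable def cpUpper (n X : ℕ) (α : ℝ) : ℝ :=
  if X = n then 1 else betaQuantile ((X : ℝ) + 1) ((n : ℝ) - X) (1 - α / 2)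

/-- The binomial probability `b(X;n,p) = C(n,X) p^X (1-p)^(n-X)`. -/
noncomputable def binomPMF (n X : ℕ) (p : ℝ) : ℝ :=
  (n.choose X : ℝ) * p ^ X * (1 - p) ^ (n - X)

open Classical in
/-- The mean coverage `C(α,n,r,s)` of the level-(1-α) Clopper–Pearson interval with respect
to the Beta(r,s) density. -/
noncomputable def meanCoverage (α : ℝ) (n : ℕ) (r s : ℝ) : ℝ :=
  ∫ p in (0:ℝ)..1,
    (∑ X ∈ Finset.range (n + 1),
      (if cpLower n X α ≤ p ∧ p ≤ cpUpper n X α then binomPMF n X p else 0)) * betaPDF r s p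
open Set MeasureTheory intervalIntegral

namespace CPproof

noncomputable def g (r s : ℝ) : ℝ → ℝ := fun t => t ^ (r - 1) * (1 - t) ^ (s - 1)

lemma g_contOn (r s : ℝ) : ContinuousOn (g r s) (Ioc 0 (1/2)) := by
  apply ContinuousOn.mul
  · exact continuousOn_id.rpow_const fun x hx => Or.inl (ne_of_gt hx.1)
  · exact (continuousOn_const.sub continuousOn_id).rpow_const
      fun x hx => Or.inl (by intro h; simp only [Pi.sub_apply, id] at h; nlinarith [hx.2])

lemma g_nonneg {r s : ℝ} {t : ℝ} (h0 : 0 ≤ t) (h1 : t ≤ 1) : 0 ≤ g r s t :=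
  mul_nonneg (Real.rpow_nonneg h0 _) (Real.rpow_nonneg (by linarith) _)

lemma g_pos {r s : ℝ} {t : ℝ} (ht : t ∈ Ioo (0:ℝ) 1) : 0 < g r s t :=
  mul_pos (Real.rpow_pos_of_pos ht.1 _) (Real.rpow_pos_of_pos (by linarith [ht.2]) _)

lemma g_swap (r s : ℝ) (x : ℝ) : g s r (1 - x) = g r s x := by
  simp [g, mul_comm]

lemma g_int_left {r s : ℝ} (hr : 0 < r) : IntervalIntegrable (g r s) volume 0 (1/2) := by
  rw [intervalIntegrable_iff, uIoc_of_le (by norm_num : (0:ℝ) ≤ 1/2)]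
  have h1 : IntegrableOn (fun t : ℝ => t ^ (r - 1)) (Ioc 0 (1/2)) volume := by
    have := intervalIntegrable_rpow' (a := 0) (b := 1/2) (r := r - 1) (by linarith)
    rwa [intervalIntegrable_iff, uIoc_of_le (by norm_num : (0:ℝ) ≤ 1/2)] at this
  set C : ℝ := max 1 ((2:ℝ)⁻¹ ^ (s - 1)) with hC
  refine Integrable.mono' (h1.const_mul C)
    ((g_contOn r s).aestronglyMeasurable measurableSet_Ioc) ?_
  rw [ae_restrict_iff' measurableSet_Ioc]
  filter_upwards with t ht
  have ht1 : 0 < t := ht.1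
  have ht2 : t ≤ 1/2 := ht.2
  have hbase : (2:ℝ)⁻¹ ≤ 1 - t := by linarith
  have hb : (1 - t) ^ (s - 1) ≤ C := by
    rcases le_or_gt 0 (s - 1) with h | h
    · exact le_trans (Real.rpow_le_one (by linarith) (by linarith) h) (le_max_left _ _)
    · exact le_trans (Real.rpow_le_rpow_of_nonpos (by norm_num) hbase h.le)
        (le_max_right _ _)
  rw [Real.norm_of_nonneg (g_nonneg ht1.le (by linarith))]
  calc g r s t ≤ t ^ (r - 1) * C :=
        mul_le_mul_of_nonneg_left hb (Real.rpow_nonneg ht1.le _)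
    _ = C * t ^ (r - 1) := mul_comm _ _

lemma g_int {r s : ℝ} (hr : 0 < r) (hs : 0 < s) : IntervalIntegrable (g r s) volume 0 1 := by
  have h2 : IntervalIntegrable (g r s) volume (1/2) 1 := by
    have := (g_int_left (r := s) (s := r) hs).comp_sub_left 1
    simp only [g_swap] at this
    norm_num at this
    exact this.symm
  exact (g_int_left hr).trans h2

lemma betaFun_pos {r s : ℝ} (hr : 0 < r) (hs : 0 < s) : 0 < betaFun r s :=
  intervalIntegral_pos_of_pos_on (g_int hr hs) (fun _ hx => g_pos hx) one_pos

end CPproof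
namespace CPproof
variable {r s : ℝ}

lemma pdf_nonneg (hr : 0 < r) (hs : 0 < s) {t : ℝ} (h0 : 0 ≤ t) (h1 : t ≤ 1) :
    0 ≤ betaPDF r s t :=
  div_nonneg (g_nonneg h0 h1) (betaFun_pos hr hs).le

lemma pdf_pos (hr : 0 < r) (hs : 0 < s) {t : ℝ} (ht : t ∈ Ioo (0:ℝ) 1) :
    0 < betaPDF r s t :=
  div_pos (g_pos ht) (betaFun_pos hr hs)

lemma pdf_int (hr : 0 < r) (hs : 0 < s) : IntervalIntegrable (betaPDF r s) volume 0 1 :=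
  (g_int hr hs).div_const _

lemma pdf_intOn (hr : 0 < r) (hs : 0 < s) : IntegrableOn (betaPDF r s) (Ioc 0 1) volume := by
  have := pdf_int hr hs
  rwa [intervalIntegrable_iff, uIoc_of_le zero_le_one] at this

lemma pdf_int_sub (hr : 0 < r) (hs : 0 < s) {a b : ℝ}
    (ha : a ∈ Icc (0:ℝ) 1) (hb : b ∈ Icc (0:ℝ) 1) :
    IntervalIntegrable (betaPDF r s) volume a b := by
  rw [intervalIntegrable_iff]
  exact (pdf_intOn hr hs).mono_set
    (Set.Ioc_subset_Ioc (le_min ha.1 hb.1) (max_le ha.2 hb.2))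

lemma cdf_zero (r s : ℝ) : betaCDF r s 0 = 0 := integral_same

lemma cdf_one (hr : 0 < r) (hs : 0 < s) : betaCDF r s 1 = 1 := by
  have hβ : betaFun r s ≠ 0 := (betaFun_pos hr hs).ne'
  unfold betaCDF betaPDF
  rw [intervalIntegral.integral_div]
  exact div_eq_one_iff_eq hβ |>.mpr rfl

lemma cdf_contOn (hr : 0 < r) (hs : 0 < s) : ContinuousOn (betaCDF r s) (Icc 0 1) := by
  have h : IntegrableOn (betaPDF r s) (uIcc 0 1) volume := by
    rw [uIcc_of_le zero_le_one, integrableOn_Icc_iff_integrableOn_Ioc]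
    exact pdf_intOn hr hs
  have := intervalIntegral.continuousOn_primitive_interval h
  rwa [uIcc_of_le zero_le_one] at this

lemma cdf_sub (hr : 0 < r) (hs : 0 < s) {a b : ℝ}
    (ha : a ∈ Icc (0:ℝ) 1) (hb : b ∈ Icc (0:ℝ) 1) :
    betaCDF r s b - betaCDF r s a = ∫ t in a..b, betaPDF r s t :=
  intervalIntegral.integral_interval_sub_left (pdf_int_sub hr hs (left_mem_Icc.mpr zero_le_one) hb)
    (pdf_int_sub hr hs (left_mem_Icc.mpr zero_le_one) ha)

lemma cdf_strictMonoOn (hr : 0 < r) (hs : 0 < s) :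
    StrictMonoOn (betaCDF r s) (Icc 0 1) := by
  intro a ha b hb hab
  have h : 0 < ∫ t in a..b, betaPDF r s t := by
    apply intervalIntegral_pos_of_pos_on (pdf_int_sub hr hs ha hb) _ hab
    intro x hx
    exact pdf_pos hr hs ⟨lt_of_le_of_lt ha.1 hx.1, lt_of_lt_of_le hx.2 hb.2⟩
  have := cdf_sub hr hs ha hb
  linarith

lemma exists_cdf_eq (hr : 0 < r) (hs : 0 < s) {q : ℝ} (hq : q ∈ Ioo (0:ℝ) 1) :
    ∃ t, t ∈ Ioo (0:ℝ) 1 ∧ betaCDF r s t = q := by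
  have h := intermediate_value_Ioo (zero_le_one) (cdf_contOn hr hs)
  rw [cdf_zero, cdf_one hr hs] at h
  obtain ⟨t, ht, hfeq⟩ := h hq
  exact ⟨t, ht, hfeq⟩

lemma quantile_spec (hr : 0 < r) (hs : 0 < s) {q : ℝ} (hq : q ∈ Ioo (0:ℝ) 1) :
    betaQuantile r s q ∈ Ioo (0:ℝ) 1 ∧ betaCDF r s (betaQuantile r s q) = q := by
  have h := exists_cdf_eq hr hs hq
  rw [betaQuantile, dif_pos h]
  exact h.choose_spec

lemma quantile_strictMonoOn (hr : 0 < r) (hs : 0 < s) :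
    StrictMonoOn (betaQuantile r s) (Ioo 0 1) := by
  intro q1 h1 q2 h2 h12
  obtain ⟨ht1, he1⟩ := quantile_spec hr hs h1
  obtain ⟨ht2, he2⟩ := quantile_spec hr hs h2
  by_contra hle
  push_neg at hle
  have := (cdf_strictMonoOn hr hs).monotoneOn
    (Ioo_subset_Icc_self ht2) (Ioo_subset_Icc_self ht1) hle
  rw [he1, he2] at this
  linarith

lemma quantile_image (hr : 0 < r) (hs : 0 < s) :
    betaQuantile r s '' Ioo 0 1 = Ioo 0 1 := by
  apply Subset.antisymm
  · rintro _ ⟨q, hq, rfl⟩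
    exact (quantile_spec hr hs hq).1
  · intro t ht
    have hq : betaCDF r s t ∈ Ioo (0:ℝ) 1 := by
      constructor
      · have := cdf_strictMonoOn hr hs (left_mem_Icc.mpr zero_le_one)
          (Ioo_subset_Icc_self ht) ht.1
        rwa [cdf_zero] at this
      · have := cdf_strictMonoOn hr hs (Ioo_subset_Icc_self ht)
          (right_mem_Icc.mpr zero_le_one) ht.2
        rwa [cdf_one hr hs] at this
    refine ⟨betaCDF r s t, hq, ?_⟩
    obtain ⟨ht', he'⟩ := quantile_spec hr hs hq
    exact (cdf_strictMonoOn hr hs).injOn (Ioo_subset_Icc_self ht')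
      (Ioo_subset_Icc_self ht) he'

lemma quantile_contOn (hr : 0 < r) (hs : 0 < s) :
    ContinuousOn (betaQuantile r s) (Ioo 0 1) := by
  intro q hq
  refine ((quantile_strictMonoOn hr hs).continuousAt_of_image_mem_nhds
    (isOpen_Ioo.mem_nhds hq) ?_).continuousWithinAt
  rw [quantile_image hr hs]
  exact isOpen_Ioo.mem_nhds (quantile_spec hr hs hq).1

end CPproof
namespace CPproof
variable {r s : ℝ} {n X : ℕ}

lemma binom_cont (n X : ℕ) : Continuous (binomPMF n X) := by
  unfold binomPMF; continuity

lemma binom_nonneg {p : ℝ} (h0 : 0 ≤ p) (h1 : p ≤ 1) : 0 ≤ binomPMF n X p :=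
  mul_nonneg (mul_nonneg (Nat.cast_nonneg _) (pow_nonneg h0 _)) (pow_nonneg (by linarith) _)

lemma binom_le {p : ℝ} (h0 : 0 ≤ p) (h1 : p ≤ 1) : binomPMF n X p ≤ (n.choose X : ℝ) := by
  unfold binomPMF
  calc (n.choose X : ℝ) * p ^ X * (1 - p) ^ (n - X)
      ≤ (n.choose X : ℝ) * 1 * 1 := by
        apply mul_le_mul
        · apply mul_le_mul le_rfl (pow_le_one₀ h0 h1) (pow_nonneg h0 _) (Nat.cast_nonneg _)
        · exact pow_le_one₀ (by linarith) (by linarith)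
        · exact pow_nonneg (by linarith) _
        · positivity
    _ = (n.choose X : ℝ) := by ring

lemma binom_pos (hX : X ≤ n) {p : ℝ} (hp : p ∈ Ioo (0:ℝ) 1) : 0 < binomPMF n X p :=
  mul_pos (mul_pos (by exact_mod_cast Nat.choose_pos hX) (pow_pos hp.1 _))
    (pow_pos (by linarith [hp.2]) _)

lemma h_intOn (hr : 0 < r) (hs : 0 < s) (n X : ℕ) :
    IntegrableOn (fun p => binomPMF n X p * betaPDF r s p) (Ioc 0 1) volume := by
  refine Integrable.mono' ((pdf_intOn hr hs).const_mul (n.choose X : ℝ))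
    (((binom_cont n X).aestronglyMeasurable).mul (pdf_intOn hr hs).aestronglyMeasurable) ?_
  rw [ae_restrict_iff' measurableSet_Ioc]
  filter_upwards with p hp
  have h0 : (0:ℝ) ≤ p := hp.1.le
  have h1 : p ≤ 1 := hp.2
  rw [Real.norm_of_nonneg (mul_nonneg (binom_nonneg h0 h1) (pdf_nonneg hr hs h0 h1))]
  exact mul_le_mul_of_nonneg_right (binom_le h0 h1) (pdf_nonneg hr hs h0 h1)

lemma h_int_sub (hr : 0 < r) (hs : 0 < s) {a b : ℝ}
    (ha : a ∈ Icc (0:ℝ) 1) (hb : b ∈ Icc (0:ℝ) 1) :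
    IntervalIntegrable (fun p => binomPMF n X p * betaPDF r s p) volume a b := by
  rw [intervalIntegrable_iff]
  exact (h_intOn hr hs n X).mono_set
    (Set.Ioc_subset_Ioc (le_min ha.1 hb.1) (max_le ha.2 hb.2))

/-- Primitive of the coverage integrand. -/
noncomputable def Hfun (n X : ℕ) (r s : ℝ) (t : ℝ) : ℝ :=
  ∫ p in (0:ℝ)..t, binomPMF n X p * betaPDF r s p

lemma Hfun_zero : Hfun n X r s 0 = 0 := integral_same

lemma Hfun_sub (hr : 0 < r) (hs : 0 < s) {a b : ℝ}
    (ha : a ∈ Icc (0:ℝ) 1) (hb : b ∈ Icc (0:ℝ) 1) :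
    Hfun n X r s b - Hfun n X r s a = ∫ p in a..b, binomPMF n X p * betaPDF r s p :=
  intervalIntegral.integral_interval_sub_left
    (h_int_sub hr hs (left_mem_Icc.mpr zero_le_one) hb)
    (h_int_sub hr hs (left_mem_Icc.mpr zero_le_one) ha)

lemma Hfun_mono (hr : 0 < r) (hs : 0 < s) : MonotoneOn (Hfun n X r s) (Icc 0 1) := by
  intro a ha b hb hab
  have h : 0 ≤ ∫ p in a..b, binomPMF n X p * betaPDF r s p := by
    apply intervalIntegral.integral_nonneg hab
    intro u hu
    have h0 : (0:ℝ) ≤ u := le_trans ha.1 hu.1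
    have h1 : u ≤ 1 := le_trans hu.2 hb.2
    exact mul_nonneg (binom_nonneg h0 h1) (pdf_nonneg hr hs h0 h1)
  have := Hfun_sub (n := n) (X := X) hr hs ha hb
  linarith

lemma Hfun_strictMonoOn (hr : 0 < r) (hs : 0 < s) (hX : X ≤ n) :
    StrictMonoOn (Hfun n X r s) (Icc 0 1) := by
  intro a ha b hb hab
  have h : 0 < ∫ p in a..b, binomPMF n X p * betaPDF r s p := by
    apply intervalIntegral_pos_of_pos_on (h_int_sub hr hs ha hb) _ hab
    intro x hx
    have hx' : x ∈ Ioo (0:ℝ) 1 := ⟨lt_of_le_of_lt ha.1 hx.1, lt_of_lt_of_le hx.2 hb.2⟩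
    exact mul_pos (binom_pos hX hx') (pdf_pos hr hs hx')
  have := Hfun_sub (n := n) (X := X) hr hs ha hb
  linarith

lemma Hfun_contOn (hr : 0 < r) (hs : 0 < s) : ContinuousOn (Hfun n X r s) (Icc 0 1) := by
  have h : IntegrableOn (fun p => binomPMF n X p * betaPDF r s p) (uIcc 0 1) volume := by
    rw [uIcc_of_le zero_le_one, integrableOn_Icc_iff_integrableOn_Ioc]
    exact h_intOn hr hs n X
  have := intervalIntegral.continuousOn_primitive_interval h
  rwa [uIcc_of_le zero_le_one] at this

lemma indicator_eq (L U : ℝ) (n X : ℕ) (r s : ℝ) :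
    (fun p => (if L ≤ p ∧ p ≤ U then binomPMF n X p else 0) * betaPDF r s p)
      = (Icc L U).indicator (fun p => binomPMF n X p * betaPDF r s p) := by
  funext p
  by_cases hp : L ≤ p ∧ p ≤ U
  · rw [if_pos hp, Set.indicator_of_mem (mem_Icc.mpr hp)]
  · rw [if_neg hp, Set.indicator_of_notMem (fun hm => hp (mem_Icc.mp hm)), zero_mul]

lemma term_intInt (hr : 0 < r) (hs : 0 < s) (L U : ℝ) :
    IntervalIntegrable
      (fun p => (if L ≤ p ∧ p ≤ U then binomPMF n X p else 0) * betaPDF r s p) volume 0 1 := by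
  rw [indicator_eq, intervalIntegrable_iff, uIoc_of_le zero_le_one]
  exact (h_intOn hr hs n X).indicator measurableSet_Icc

lemma term_eq (hr : 0 < r) (hs : 0 < s) {L U : ℝ}
    (hL : L ∈ Icc (0:ℝ) 1) (hU : U ∈ Icc (0:ℝ) 1) :
    (∫ p in (0:ℝ)..1, (if L ≤ p ∧ p ≤ U then binomPMF n X p else 0) * betaPDF r s p)
      = max (Hfun n X r s U - Hfun n X r s L) 0 := by
  rw [indicator_eq, integral_of_le zero_le_one, setIntegral_indicator measurableSet_Icc]
  by_cases hLU : L ≤ U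
  · have hset : (Ioc (0:ℝ) 1 ∩ Icc L U : Set ℝ) =ᵐ[volume] (Ioc L U : Set ℝ) := by
      have h1 : (Ioc (0:ℝ) 1 ∩ Icc L U : Set ℝ) =ᵐ[volume] (Ioc (0:ℝ) 1 ∩ Ioc L U : Set ℝ) :=
        ae_eq_set_inter (Filter.EventuallyEq.refl _ _) Ioc_ae_eq_Icc.symm
      have h2 : (Ioc (0:ℝ) 1 ∩ Ioc L U : Set ℝ) = Ioc L U := by
        rw [Set.Ioc_inter_Ioc, max_eq_right hL.1, min_eq_right hU.2]
      rw [h2] at h1; exact h1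
    rw [setIntegral_congr_set hset, ← integral_of_le hLU,
      ← Hfun_sub (n := n) (X := X) hr hs hL hU]
    exact (max_eq_left (by linarith [Hfun_mono (n := n) (X := X) hr hs hL hU hLU])).symm
  · push_neg at hLU
    rw [Set.Icc_eq_empty (not_le.mpr hLU), Set.inter_empty]
    simp only [Measure.restrict_empty, integral_zero_measure]
    exact (max_eq_right
      (by linarith [Hfun_mono (n := n) (X := X) hr hs hU hL hLU.le])).symm

end CPproof
namespace CPproof
variable {r s : ℝ} {n X : ℕ} {α α₁ α₂ : ℝ}

lemma half_mem (hα : α ∈ Ioo (0:ℝ) 1) : α / 2 ∈ Ioo (0:ℝ) 1 :=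
  ⟨by linarith [hα.1], by linarith [hα.2]⟩

lemma one_sub_half_mem (hα : α ∈ Ioo (0:ℝ) 1) : 1 - α / 2 ∈ Ioo (0:ℝ) 1 :=
  ⟨by linarith [hα.2], by linarith [hα.1]⟩

lemma low_r_pos (hX0 : X ≠ 0) : (0:ℝ) < (X : ℝ) :=
  Nat.cast_pos.mpr (Nat.pos_of_ne_zero hX0)

lemma low_s_pos (hX : X ≤ n) : (0:ℝ) < (n : ℝ) - X + 1 := by
  have : (X:ℝ) ≤ n := Nat.cast_le.mpr hX
  linarith

lemma up_r_pos : (0:ℝ) < (X : ℝ) + 1 := by positivity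

lemma up_s_pos (hXn : X ≠ n) (hX : X ≤ n) : (0:ℝ) < (n : ℝ) - X := by
  have : (X:ℝ) < n := Nat.cast_lt.mpr (lt_of_le_of_ne hX hXn)
  linarith

lemma cpLower_mem (hX : X ≤ n) (hα : α ∈ Ioo (0:ℝ) 1) : cpLower n X α ∈ Icc (0:ℝ) 1 := by
  unfold cpLower
  by_cases h : X = 0
  · rw [if_pos h]; exact ⟨le_rfl, zero_le_one⟩
  · rw [if_neg h]
    exact Ioo_subset_Icc_self
      (quantile_spec (low_r_pos h) (low_s_pos hX) (half_mem hα)).1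

lemma cpUpper_mem (hX : X ≤ n) (hα : α ∈ Ioo (0:ℝ) 1) : cpUpper n X α ∈ Icc (0:ℝ) 1 := by
  unfold cpUpper
  by_cases h : X = n
  · rw [if_pos h]; exact ⟨zero_le_one, le_rfl⟩
  · rw [if_neg h]
    exact Ioo_subset_Icc_self
      (quantile_spec up_r_pos (up_s_pos h hX) (one_sub_half_mem hα)).1

lemma cpLower_mono (hX : X ≤ n) (h1 : α₁ ∈ Ioo (0:ℝ) 1) (h2 : α₂ ∈ Ioo (0:ℝ) 1)
    (h12 : α₁ < α₂) : cpLower n X α₁ ≤ cpLower n X α₂ := by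
  unfold cpLower
  by_cases h : X = 0
  · rw [if_pos h, if_pos h]
  · rw [if_neg h, if_neg h]
    exact (quantile_strictMonoOn (low_r_pos h) (low_s_pos hX) (half_mem h1) (half_mem h2)
      (by linarith)).le

lemma cpUpper_anti (hX : X ≤ n) (h1 : α₁ ∈ Ioo (0:ℝ) 1) (h2 : α₂ ∈ Ioo (0:ℝ) 1)
    (h12 : α₁ < α₂) : cpUpper n X α₂ ≤ cpUpper n X α₁ := by
  unfold cpUpper
  by_cases h : X = n
  · rw [if_pos h, if_pos h]
  · rw [if_neg h, if_neg h]
    exact (quantile_strictMonoOn up_r_pos (up_s_pos h hX) (one_sub_half_mem h2)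
      (one_sub_half_mem h1) (by linarith)).le

lemma cpUpper_strict_anti (hXn : X ≠ n) (hX : X ≤ n) (h1 : α₁ ∈ Ioo (0:ℝ) 1)
    (h2 : α₂ ∈ Ioo (0:ℝ) 1) (h12 : α₁ < α₂) : cpUpper n X α₂ < cpUpper n X α₁ := by
  unfold cpUpper
  rw [if_neg hXn, if_neg hXn]
  exact quantile_strictMonoOn up_r_pos (up_s_pos hXn hX) (one_sub_half_mem h2)
    (one_sub_half_mem h1) (by linarith)

lemma cpLower_contOn (hX : X ≤ n) : ContinuousOn (fun α => cpLower n X α) (Ioo (0:ℝ) 1) := by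
  by_cases h : X = 0
  · simp only [cpLower, if_pos h]; exact continuousOn_const
  · have heq : (fun α => cpLower n X α)
        = (betaQuantile (X : ℝ) ((n : ℝ) - X + 1)) ∘ (fun α : ℝ => α / 2) := by
      funext α; simp only [cpLower, if_neg h, Function.comp]
    rw [heq]
    exact (quantile_contOn (low_r_pos h) (low_s_pos hX)).comp
      (continuous_id.div_const 2).continuousOn (fun α hα => half_mem hα)

lemma cpUpper_contOn (hX : X ≤ n) : ContinuousOn (fun α => cpUpper n X α) (Ioo (0:ℝ) 1) := by
  by_cases h : X = n
  · simp only [cpUpper, if_pos h]; exact continuousOn_const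
  · have heq : (fun α => cpUpper n X α)
        = (betaQuantile ((X : ℝ) + 1) ((n : ℝ) - X)) ∘ (fun α : ℝ => 1 - α / 2) := by
      funext α; simp only [cpUpper, if_neg h, Function.comp]
    rw [heq]
    exact (quantile_contOn up_r_pos (up_s_pos h hX)).comp
      (continuous_const.sub (continuous_id.div_const 2)).continuousOn
      (fun α hα => one_sub_half_mem hα)

lemma coverage_eq (hr : 0 < r) (hs : 0 < s) (n : ℕ) (hα : α ∈ Ioo (0:ℝ) 1) :
    meanCoverage α n r s = ∑ X ∈ Finset.range (n + 1),
      max (Hfun n X r s (cpUpper n X α) - Hfun n X r s (cpLower n X α)) 0 := by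
  unfold meanCoverage
  simp only [Finset.sum_mul]
  rw [intervalIntegral.integral_finset_sum
    (fun X _ => term_intInt hr hs (cpLower n X α) (cpUpper n X α))]
  refine Finset.sum_congr rfl fun X hX => ?_
  have hXn : X ≤ n := Nat.lt_succ_iff.mp (Finset.mem_range.mp hX)
  exact term_eq hr hs (cpLower_mem hXn hα) (cpUpper_mem hXn hα)

end CPproof

open CPproof Set MeasureTheory in
theorem meanCoverage_continuous_strictAnti (n : ℕ) (hn : 1 ≤ n) (r s : ℝ)
    (hr : 0 < r) (hs : 0 < s) :
    ContinuousOn (fun α : ℝ => meanCoverage α n r s) (Set.Ioo (0:ℝ) 1) ∧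
    StrictAntiOn (fun α : ℝ => meanCoverage α n r s) (Set.Ioo (0:ℝ) 1) := by
  have key : ∀ α ∈ Set.Ioo (0:ℝ) 1, meanCoverage α n r s
      = ∑ X ∈ Finset.range (n + 1),
        max (Hfun n X r s (cpUpper n X α) - Hfun n X r s (cpLower n X α)) 0 :=
    fun α hα => coverage_eq hr hs n hα
  constructor
  · apply ContinuousOn.congr (f := fun α => ∑ X ∈ Finset.range (n + 1),
      max (Hfun n X r s (cpUpper n X α) - Hfun n X r s (cpLower n X α)) 0)
    · apply continuousOn_finset_sum
      intro X hX
      have hXn : X ≤ n := Nat.lt_succ_iff.mp (Finset.mem_range.mp hX)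
      have hU : ContinuousOn (fun α => Hfun n X r s (cpUpper n X α)) (Ioo (0:ℝ) 1) :=
        (Hfun_contOn hr hs).comp (cpUpper_contOn hXn) (fun α hα => cpUpper_mem hXn hα)
      have hL : ContinuousOn (fun α => Hfun n X r s (cpLower n X α)) (Ioo (0:ℝ) 1) :=
        (Hfun_contOn hr hs).comp (cpLower_contOn hXn) (fun α hα => cpLower_mem hXn hα)
      exact Continuous.comp_continuousOn (continuous_id.max continuous_const) (hU.sub hL)
    · exact key
  · intro a ha b hb hab
    show meanCoverage b n r s < meanCoverage a n r s
    rw [key a ha, key b hb]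
    apply Finset.sum_lt_sum
    · intro X hX
      have hXn : X ≤ n := Nat.lt_succ_iff.mp (Finset.mem_range.mp hX)
      apply max_le_max _ le_rfl
      apply sub_le_sub
      · exact Hfun_mono hr hs (cpUpper_mem hXn hb) (cpUpper_mem hXn ha)
          (cpUpper_anti hXn ha hb hab)
      · exact Hfun_mono hr hs (cpLower_mem hXn ha) (cpLower_mem hXn hb)
          (cpLower_mono hXn ha hb hab)
    · refine ⟨0, Finset.mem_range.mpr (Nat.succ_pos n), ?_⟩
      have h0n : (0:ℕ) ≠ n := fun h => by omega
      have hL0 : ∀ γ, cpLower n 0 γ = 0 := fun γ => by simp [cpLower]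
      have hmem : ∀ {γ}, γ ∈ Ioo (0:ℝ) 1 → cpUpper n 0 γ ∈ Icc (0:ℝ) 1 :=
        fun {γ} hγ => cpUpper_mem (Nat.zero_le n) hγ
      have hmax : ∀ {γ}, γ ∈ Ioo (0:ℝ) 1 →
          max (Hfun n 0 r s (cpUpper n 0 γ) - Hfun n 0 r s (cpLower n 0 γ)) 0
            = Hfun n 0 r s (cpUpper n 0 γ) := by
        intro γ hγ
        rw [hL0, Hfun_zero, sub_zero]
        refine max_eq_left ?_
        have := Hfun_mono (n := n) (X := 0) hr hs
          (left_mem_Icc.mpr zero_le_one) (hmem hγ) (hmem hγ).1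
        rwa [Hfun_zero] at this
      rw [hmax ha, hmax hb]
      exact Hfun_strictMonoOn hr hs (Nat.zero_le n) (hmem hb) (hmem ha)
        (cpUpper_strict_anti h0n (Nat.zero_le n) ha hb hab)
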